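/- Let Q = q₁⋯q_m be a word in the generators of a finite Coxeter system (W,S) and ρ ∈ W. Then the set of facets of the subword complex SC(Q,ρ) decomposes as: F(Q,ρ) = F(Q', ρq_m) if ρ has no reduced expression as a subword of Q' (where Q' = q₁⋯q_{m−1}); F(Q,ρ) = {I ∪ {m} : I ∈ F(Q', ρ)} if ℓ(ρq_m) > ℓ(ρ); and F(Q,ρ) = F(Q', ρq_m) ⊔ {I ∪ {m} : I ∈ F(Q', ρ)} otherwise. -/

import Mathlib

/-!
The inductive decomposition of the set of facets of a subword complex `SC(Q, ρ)`
according to whether the facets contain the last letter of `Q`.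
-/

/-- A facet of the subword complex `SC(Q, ρ)`: a set of positions whose complement is
a reduced expression for `ρ` as a subword of `Q`. -/
def IsSCFacet {B W : Type*} [Group W] {M : CoxeterMatrix B} (cs : CoxeterSystem M W)
    {m : ℕ} (Q : Fin m → B) (ρ : W) (I : Finset (Fin m)) : Prop :=
  cs.wordProd ((Iᶜ.sort (· ≤ ·)).map Q) = ρ ∧ Iᶜ.card = cs.length ρ

open List CoxeterSystem

namespace SCAux

attribute [local instance] Classical.propDecidable

variable {B W : Type*} [Group W] {M : CoxeterMatrix B} (cs : CoxeterSystem M W)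

local prefix:100 "s" => cs.simple
local prefix:100 "π" => cs.wordProd
local prefix:100 "ℓ" => cs.length

/-- The sign representation map used to prove the exchange property. -/
noncomputable def pRep (i : B) : Function.End (W × ℤˣ) :=
  fun p => (s i * p.1 * s i, if p.1 = s i then -p.2 else p.2)

theorem ite_neg_eq (c : Prop) [Decidable c] (x : ℤˣ) :
    (if c then -x else x) = (if c then -1 else 1) * x := by split <;> simp

theorem conj_eq_iff {G : Type*} [Group G] (a t x : G) (n : ℕ) :
    a ^ n * t * (a⁻¹) ^ n = x ↔ t = (a⁻¹) ^ n * x * a ^ n := by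
  constructor
  · intro h; rw [← h]; group
  · intro h; rw [h]; group

theorem conj_eq_iff' {G : Type*} [Group G] (u x y : G) : u * x * u = y ↔ x = u⁻¹ * y * u⁻¹ := by
  constructor
  · intro h; rw [← h]; group
  · intro h; rw [h]; group

theorem conj_pow_aux (i i' : B) (n : ℕ) :
    s i' * (s i * s i') ^ n = ((s i * s i')⁻¹) ^ n * s i' := by
  have h : s i' * (s i * s i') * (s i')⁻¹ = (s i * s i')⁻¹ := by
    rw [mul_inv_rev, inv_simple, inv_simple]
    simp [mul_assoc, cs.simple_mul_simple_self]
  have h2 : s i' * (s i * s i') ^ n * (s i')⁻¹ = ((s i * s i')⁻¹) ^ n := by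
    rw [← h, conj_pow]
  calc s i' * (s i * s i') ^ n
      = (s i' * (s i * s i') ^ n * (s i')⁻¹) * s i' := by
        rw [mul_assoc, inv_mul_cancel, mul_one]
    _ = ((s i * s i')⁻¹) ^ n * s i' := by rw [h2]

theorem hA_aux (i i' : B) (n : ℕ) :
    ((s i * s i')⁻¹) ^ n * s i' * (s i * s i') ^ n = ((s i * s i')⁻¹) ^ (2 * n) * s i' := by
  rw [mul_assoc, conj_pow_aux, ← mul_assoc, ← pow_add, two_mul]

theorem hB_aux (i i' : B) (n : ℕ) :
    ((s i * s i')⁻¹) ^ n * (s i' * s i * s i') * (s i * s i') ^ n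
      = ((s i * s i')⁻¹) ^ (2 * n + 1) * s i' := by
  have h1 : s i' * s i * s i' = (s i * s i')⁻¹ * s i' := by
    rw [mul_inv_rev, inv_simple, inv_simple]
  have h2 : 2 * n + 1 = (n + 1) + n := by ring
  rw [h1, h2, ← mul_assoc, ← pow_succ, mul_assoc, conj_pow_aux, ← mul_assoc, ← pow_add]

theorem pRep_mul_apply (i i' : B) (t : W) (ε : ℤˣ) :
    (pRep cs i * pRep cs i') (t, ε) =
      ((s i * s i') * t * (s i * s i')⁻¹,
        ((if s i' * t * s i' = s i then (-1 : ℤˣ) else 1) *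
         (if t = s i' then (-1 : ℤˣ) else 1)) * ε) := by
  show pRep cs i (pRep cs i' (t, ε)) = _
  simp only [pRep]
  refine Prod.ext ?_ ?_
  · show s i * (s i' * t * s i') * s i = (s i * s i') * t * (s i * s i')⁻¹
    rw [mul_inv_rev, inv_simple, inv_simple]
    simp only [mul_assoc]
  · show (if s i' * t * s i' = s i then -(if t = s i' then -ε else ε)
        else (if t = s i' then -ε else ε)) = _
    rw [ite_neg_eq _ ε, ite_neg_eq]
    split <;> split <;> simp [mul_assoc]

theorem pRep_pow_apply (i i' : B) (n : ℕ) (t : W) (ε : ℤˣ) :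
    ((pRep cs i * pRep cs i') ^ n) (t, ε) =
      ((s i * s i') ^ n * t * ((s i * s i')⁻¹) ^ n,
        (∏ j ∈ Finset.range (2 * n),
          if t = ((s i * s i')⁻¹) ^ j * s i' then (-1 : ℤˣ) else 1) * ε) := by
  induction n with
  | zero => simp; rfl
  | succ n ih =>
    rw [pow_succ']
    have happ : ∀ (f g : Function.End (W × ℤˣ)) (x : W × ℤˣ), (f * g) x = f (g x) :=
      fun _ _ _ => rfl
    rw [happ, ih, pRep_mul_apply]
    set a := s i * s i' with ha
    set T := a ^ n * t * (a⁻¹) ^ n with hT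
    have c1 : (T = s i') ↔ (t = (a⁻¹) ^ (2 * n) * s i') := by
      rw [hT, conj_eq_iff, ← hA_aux cs i i', mul_assoc]
    have c2 : (s i' * T * s i' = s i) ↔ (t = (a⁻¹) ^ (2 * n + 1) * s i') := by
      have hTc : (s i' * T * s i' = s i) ↔ T = s i' * s i * s i' := by
        rw [conj_eq_iff', inv_simple]
      rw [hTc, hT, conj_eq_iff, ← hB_aux cs i i', mul_assoc, mul_assoc]
    refine Prod.ext ?_ ?_
    · show a * T * a⁻¹ = a ^ (n + 1) * t * (a⁻¹) ^ (n + 1)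
      rw [hT, pow_succ a n, pow_succ' a⁻¹ n]
      group
    · show ((if s i' * T * s i' = s i then (-1:ℤˣ) else 1) *
          (if T = s i' then (-1:ℤˣ) else 1)) * (_ * ε) = _
      rw [c1, c2]
      have h2 : 2 * (n + 1) = (2 * n + 1) + 1 := by ring
      rw [h2, Finset.prod_range_succ, Finset.prod_range_succ]
      ac_rfl

theorem pRep_liftable : CoxeterMatrix.IsLiftable M (pRep cs) := by
  intro i i'
  have ham : (s i * s i') ^ M i i' = 1 := cs.simple_mul_simple_pow i i'
  have hbm : ((s i * s i')⁻¹) ^ M i i' = 1 := by rw [inv_pow, ham, inv_one]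
  funext ⟨t, ε⟩
  rw [pRep_pow_apply, ham, hbm]
  have hprod : (∏ j ∈ Finset.range (2 * M i i'),
      if t = ((s i * s i')⁻¹) ^ j * s i' then (-1 : ℤˣ) else 1) = 1 := by
    rw [two_mul, Finset.prod_range_add]
    have : ∀ j, ((s i * s i')⁻¹) ^ (M i i' + j) = ((s i * s i')⁻¹) ^ j := by
      intro j; rw [pow_add, hbm, one_mul]
    have heq : (∏ j ∈ Finset.range (M i i'),
        if t = ((s i * s i')⁻¹) ^ (M i i' + j) * s i' then (-1 : ℤˣ) else 1) =
        ∏ j ∈ Finset.range (M i i'),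
        if t = ((s i * s i')⁻¹) ^ j * s i' then (-1 : ℤˣ) else 1 := by
      refine Finset.prod_congr rfl fun j _ => ?_
      rw [this j]
    rw [heq, ← sq]
    exact Int.units_sq _
  rw [hprod]
  show _ = (t, ε)
  simp


noncomputable def phiRep : W →* Function.End (W × ℤˣ) :=
  cs.lift ⟨pRep cs, pRep_liftable cs⟩

theorem phiRep_simple (i : B) : phiRep cs (s i) = pRep cs i :=
  cs.lift_apply_simple (pRep_liftable cs) i

theorem end_mul_apply (f g : Function.End (W × ℤˣ)) (x : W × ℤˣ) : (f * g) x = f (g x) := rfl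

theorem phiRep_wordProd_inv (ω : List B) (t : W) (ε : ℤˣ) :
    phiRep cs (π ω)⁻¹ (t, ε) =
      ((π ω)⁻¹ * t * π ω, (-1 : ℤˣ) ^ ((cs.leftInvSeq ω).count t) * ε) := by
  induction ω generalizing t ε with
  | nil =>
    rw [wordProd_nil, inv_one, map_one]
    show (t, ε) = _
    simp
  | cons i α ih =>
    rw [wordProd_cons, mul_inv_rev, inv_simple, map_mul, end_mul_apply, phiRep_simple]
    have hp : pRep cs i (t, ε) = (s i * t * s i, if t = s i then -ε else ε) := rfl
    rw [hp, ih]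
    have hlis : cs.leftInvSeq (i :: α) = s i :: List.map (MulAut.conj (s i)) (cs.leftInvSeq α) :=
      rfl
    have hcmap : (List.map (MulAut.conj (s i)) (cs.leftInvSeq α)).count t
        = (cs.leftInvSeq α).count (s i * t * s i) := by
      have hval : (MulAut.conj (s i)) (s i * t * s i) = t := by
        simp [MulAut.conj_apply, mul_assoc, cs.simple_mul_simple_cancel_left]
      have h2 := List.count_map_of_injective (cs.leftInvSeq α) (⇑(MulAut.conj (s i)))
        (MulAut.conj (s i)).injective (s i * t * s i)
      rw [hval] at h2
      exact h2
    refine Prod.ext ?_ ?_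
    · show (π α)⁻¹ * (s i * t * s i) * (π α) = (π α)⁻¹ * s i * t * (s i * π α)
      simp [mul_assoc]
    · show (-1 : ℤˣ) ^ ((cs.leftInvSeq α).count (s i * t * s i)) * (if t = s i then -ε else ε)
        = (-1 : ℤˣ) ^ ((cs.leftInvSeq (i :: α)).count t) * ε
      rw [hlis, List.count_cons, hcmap]
      by_cases ht : t = s i
      · subst ht
        simp only [if_pos rfl, beq_self_eq_true, if_true, pow_succ]
        simp [mul_assoc, mul_comm, mul_left_comm]
      · have hbeq : (t == s i) = false := by simpa using ht
        simp [ht, hbeq, Ne.symm ht]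

theorem count_lis_parity (ω₁ ω₂ : List B) (h : π ω₁ = π ω₂) (t : W) :
    ((-1 : ℤˣ) ^ ((cs.leftInvSeq ω₁).count t)) = (-1) ^ ((cs.leftInvSeq ω₂).count t) := by
  have h1 := phiRep_wordProd_inv cs ω₁ t 1
  have h2 := phiRep_wordProd_inv cs ω₂ t 1
  rw [h] at h1
  have := h1.symm.trans h2
  have := congrArg Prod.snd this
  simpa using this

theorem simple_mem_leftInvSeq_of_descent (ω : List B) (i : B)
    (h : ℓ (s i * π ω) < ℓ (π ω)) : s i ∈ cs.leftInvSeq ω := by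
  obtain ⟨α, hlen, hval⟩ := cs.exists_reduced_word (s i * π ω)
  have hredα : cs.IsReduced α := by
    exact hlen
  have hπ : π (i :: α) = π ω := by
    rw [wordProd_cons, ← hval, cs.simple_mul_simple_cancel_left]
  have hc0 : (cs.leftInvSeq α).count (s i) = 0 := by
    rw [List.count_eq_zero]
    intro hmem
    have hinv := cs.isLeftInversion_of_mem_leftInvSeq hredα hmem
    have := hinv.2
    rw [← hval] at this
    rw [cs.simple_mul_simple_cancel_left] at this
    omega
  have hcnt : (cs.leftInvSeq (i :: α)).count (s i) = 1 := by
    have hlis : cs.leftInvSeq (i :: α) = s i :: List.map (MulAut.conj (s i)) (cs.leftInvSeq α) :=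
      rfl
    have hval2 : (MulAut.conj (s i)) (s i) = s i := by
      rw [MulAut.conj_apply, inv_simple, mul_assoc, cs.simple_mul_simple_self, mul_one]
    have : (List.map (MulAut.conj (s i)) (cs.leftInvSeq α)).count (s i) = 0 := by
      nth_rewrite 1 [← hval2]
      rw [List.count_map_of_injective _ _ (MulAut.conj (s i)).injective, hc0]
    rw [hlis, List.count_cons, this]
    simp
  have hpar := count_lis_parity cs ω (i :: α) hπ.symm (s i)
  rw [hcnt] at hpar
  by_contra hnm
  rw [List.count_eq_zero_of_not_mem hnm] at hpar
  simp at hpar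

theorem simple_mem_rightInvSeq_of_descent (ω : List B) (i : B)
    (h : ℓ (π ω * s i) < ℓ (π ω)) : s i ∈ cs.rightInvSeq ω := by
  have h' : ℓ (s i * π ω.reverse) < ℓ (π ω.reverse) := by
    rw [cs.wordProd_reverse]
    have e1 : s i * (π ω)⁻¹ = (π ω * s i)⁻¹ := by
      rw [mul_inv_rev, inv_simple]
    rw [e1, cs.length_inv, cs.length_inv]
    exact h
  have := simple_mem_leftInvSeq_of_descent cs ω.reverse i h'
  rw [cs.leftInvSeq_reverse, List.mem_reverse] at this
  exact this

/-- The exchange property. -/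
theorem exists_eraseIdx_of_descent (ω : List B) (i : B)
    (h : ℓ (π ω * s i) < ℓ (π ω)) :
    ∃ j < ω.length, π ω * s i = π (ω.eraseIdx j) := by
  have hmem := simple_mem_rightInvSeq_of_descent cs ω i h
  obtain ⟨j, hj, hget⟩ := List.mem_iff_getElem.mp hmem
  rw [cs.length_rightInvSeq] at hj
  refine ⟨j, hj, ?_⟩
  rw [← cs.wordProd_mul_getD_rightInvSeq ω j]
  congr 1
  rw [List.getD_eq_getElem _ _ (by rw [cs.length_rightInvSeq]; exact hj)]
  exact hget.symm

/-- Deletion for reduced subwords: the set of elements having a reduced word that is a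
subword of `L` is closed under right descents. -/
theorem descent_subword {L : List B} {w : W}
    (hw : ∃ ω, ω.Sublist L ∧ cs.IsReduced ω ∧ π ω = w) (i : B)
    (h : ℓ (w * s i) < ℓ w) :
    ∃ ω, ω.Sublist L ∧ cs.IsReduced ω ∧ π ω = w * s i := by
  obtain ⟨ω, hsub, hred, hval⟩ := hw
  rw [← hval] at h ⊢
  obtain ⟨j, hj, heq⟩ := exists_eraseIdx_of_descent cs ω i h
  refine ⟨ω.eraseIdx j, (ω.eraseIdx_sublist j).trans hsub, ?_, heq.symm⟩
  unfold CoxeterSystem.IsReduced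
  rw [← heq]
  have hlen : (ω.eraseIdx j).length = ω.length - 1 := by
    rw [List.length_eraseIdx]
    simp [hj]
  have hlw : ℓ (π ω) = ω.length := hred
  have := cs.length_mul_simple (π ω) i
  have hle : ℓ (π ω * s i) ≤ (ω.eraseIdx j).length := by
    rw [heq]; exact cs.length_wordProd_le _
  omega

section Subword

theorem sort_image_castSucc {m : ℕ} (S : Finset (Fin m)) :
    ((S.image Fin.castSucc).sort (· ≤ ·)) = (S.sort (· ≤ ·)).map Fin.castSucc := by
  have hnd : ((S.sort (· ≤ ·)).map Fin.castSucc).Nodup :=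
    (Finset.sort_nodup S _).map (Fin.castSucc_injective _)
  have hts : ((S.sort (· ≤ ·)).map Fin.castSucc).toFinset = S.image Fin.castSucc := by
    ext x
    simp [List.mem_toFinset, Finset.mem_image, Finset.mem_sort]
  rw [← hts]
  refine (List.toFinset_sort _ hnd).mpr ?_
  exact List.Pairwise.map _ (fun a b hab => Fin.castSucc_le_castSucc_iff.mpr hab)
    (Finset.pairwise_sort S _)

theorem sort_insert_last {m : ℕ} (T : Finset (Fin (m + 1))) (hT : ∀ x ∈ T, x < Fin.last m) :
    (insert (Fin.last m) T).sort (· ≤ ·) = T.sort (· ≤ ·) ++ [Fin.last m] := by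
  have hnl : Fin.last m ∉ T := fun h => absurd (hT _ h) (lt_irrefl _)
  have hnd : (T.sort (· ≤ ·) ++ [Fin.last m]).Nodup := by
    rw [List.nodup_append]
    refine ⟨Finset.sort_nodup T _, List.nodup_singleton _, ?_⟩
    intro x hx
    simp only [List.mem_singleton]
    intro hy
    intro hy' hxy
    subst hy' hxy
    exact hnl ((Finset.mem_sort _).mp hx)
  have hts : (T.sort (· ≤ ·) ++ [Fin.last m]).toFinset = insert (Fin.last m) T := by
    rw [List.toFinset_append, Finset.sort_toFinset]
    ext x; simp [or_comm]
  rw [← hts]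
  refine (List.toFinset_sort _ hnd).mpr ?_
  apply List.pairwise_append.mpr
  refine ⟨Finset.pairwise_sort T _, List.pairwise_singleton _ _, ?_⟩
  intro x hx y hy
  rw [List.mem_singleton] at hy
  subst hy
  exact le_of_lt (hT x ((Finset.mem_sort _).mp hx))

theorem compl_image_castSucc {m : ℕ} (S : Finset (Fin m)) :
    (S.image Fin.castSucc)ᶜ = insert (Fin.last m) (Sᶜ.image Fin.castSucc) := by
  ext x
  induction x using Fin.lastCases with
  | last =>
    simp only [Finset.mem_compl, Finset.mem_insert, Finset.mem_image]
    constructor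
    · intro _; left; trivial
    · intro _ h
      obtain ⟨y, _, hy⟩ := h
      exact absurd hy (Fin.castSucc_lt_last y).ne
  | cast y =>
    simp only [Finset.mem_compl, Finset.mem_insert, Finset.mem_image, Fin.castSucc_inj]
    constructor
    · intro h
      right
      exact ⟨y, by simpa using fun hy => h ⟨y, hy, rfl⟩, rfl⟩
    · rintro (h | ⟨z, hz, hzy⟩)
      · exact absurd h (Fin.castSucc_lt_last y).ne
      · subst hzy
        rintro ⟨w, hw, hwy⟩
        subst hwy
        exact hz hw

theorem compl_insert_last {m : ℕ} (S : Finset (Fin m)) :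
    (insert (Fin.last m) (S.image Fin.castSucc))ᶜ = Sᶜ.image Fin.castSucc := by
  rw [← compl_compl (Sᶜ.image Fin.castSucc), compl_image_castSucc, compl_compl]

theorem mem_image_castSucc_lt {m : ℕ} (S : Finset (Fin m)) :
    ∀ x ∈ S.image Fin.castSucc, x < Fin.last m := by
  intro x hx
  obtain ⟨y, _, rfl⟩ := Finset.mem_image.mp hx
  exact Fin.castSucc_lt_last y

/-- Facets containing the last position. -/
theorem facet_insert_last_iff {m : ℕ} (Q : Fin (m + 1) → B) (ρ : W) (S : Finset (Fin m)) :
    IsSCFacet cs Q ρ (insert (Fin.last m) (S.image Fin.castSucc)) ↔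
      IsSCFacet cs (fun k => Q k.castSucc) ρ S := by
  unfold _root_.IsSCFacet
  rw [compl_insert_last, sort_image_castSucc, List.map_map,
    Finset.card_image_of_injective _ (Fin.castSucc_injective _)]
  rfl

/-- Facets not containing the last position, forward direction. -/
theorem facet_image_castSucc {m : ℕ} (Q : Fin (m + 1) → B) (ρ : W) (S : Finset (Fin m))
    (h : IsSCFacet cs Q ρ (S.image Fin.castSucc)) :
    IsSCFacet cs (fun k => Q k.castSucc) (ρ * s (Q (Fin.last m))) S ∧
      ℓ (ρ * s (Q (Fin.last m))) < ℓ ρ := by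
  obtain ⟨hval, hcard⟩ := h
  rw [compl_image_castSucc, sort_insert_last _ (mem_image_castSucc_lt _),
    List.map_append, cs.wordProd_append, sort_image_castSucc, List.map_map,
    List.map_singleton, cs.wordProd_singleton] at hval
  rw [compl_image_castSucc, Finset.card_insert_of_notMem (by
    intro hc
    exact absurd rfl (mem_image_castSucc_lt _ _ hc).ne),
    Finset.card_image_of_injective _ (Fin.castSucc_injective _)] at hcard
  set v := cs.wordProd ((Sᶜ.sort (· ≤ ·)).map (Q ∘ Fin.castSucc)) with hv
  have hvq : v = ρ * s (Q (Fin.last m)) := by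
    rw [← hval, cs.simple_mul_simple_cancel_right]
  have hlen_le : ℓ (ρ * s (Q (Fin.last m))) ≤ Sᶜ.card := by
    rw [← hvq, hv]
    calc ℓ (cs.wordProd ((Sᶜ.sort (· ≤ ·)).map (Q ∘ Fin.castSucc)))
        ≤ ((Sᶜ.sort (· ≤ ·)).map (Q ∘ Fin.castSucc)).length := cs.length_wordProd_le _
      _ = Sᶜ.card := by rw [List.length_map, Finset.length_sort]
  have hms := cs.length_mul_simple ρ (Q (Fin.last m))
  have hcard' : Sᶜ.card + 1 = ℓ ρ := hcard
  have hlen : ℓ (ρ * s (Q (Fin.last m))) = Sᶜ.card := by omega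
  exact ⟨⟨hvq.symm ▸ hv.symm, hlen.symm ▸ rfl⟩, by omega⟩

/-- Facets not containing the last position, reverse direction. -/
theorem facet_image_castSucc' {m : ℕ} (Q : Fin (m + 1) → B) (ρ : W) (S : Finset (Fin m))
    (hlt : ℓ (ρ * s (Q (Fin.last m))) < ℓ ρ)
    (h : IsSCFacet cs (fun k => Q k.castSucc) (ρ * s (Q (Fin.last m))) S) :
    IsSCFacet cs Q ρ (S.image Fin.castSucc) := by
  obtain ⟨hval, hcard⟩ := h
  have hms := cs.length_mul_simple ρ (Q (Fin.last m))
  have hfun : (Q ∘ Fin.castSucc) = (fun k => Q k.castSucc) := rfl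
  constructor
  · rw [compl_image_castSucc, sort_insert_last _ (mem_image_castSucc_lt _),
      List.map_append, cs.wordProd_append, sort_image_castSucc, List.map_map,
      List.map_singleton, cs.wordProd_singleton, hfun, hval,
      cs.simple_mul_simple_cancel_right]
  · rw [compl_image_castSucc, Finset.card_insert_of_notMem (by
      intro hc
      exact absurd rfl (mem_image_castSucc_lt _ _ hc).ne),
      Finset.card_image_of_injective _ (Fin.castSucc_injective _), hcard]
    omega

/-- A group element has a facet iff it has a reduced word that is a subword. -/
theorem exists_facet_iff {m : ℕ} (Q : Fin m → B) (w : W) :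
    (∃ I, IsSCFacet cs Q w I) ↔
      ∃ ω, ω.Sublist ((Finset.univ.sort (· ≤ ·)).map Q) ∧ cs.IsReduced ω ∧ π ω = w := by
  constructor
  · rintro ⟨I, hval, hcard⟩
    refine ⟨(Iᶜ.sort (· ≤ ·)).map Q, ?_, ?_, hval⟩
    · refine List.Sublist.map Q ?_
      refine List.sublist_of_subperm_of_pairwise ?_ (Finset.pairwise_sort _ _)
        (Finset.pairwise_sort _ _)
      exact (Finset.sort_nodup _ _).subperm
        (fun x hx => (Finset.mem_sort _).mpr (Finset.mem_univ x))
    · unfold CoxeterSystem.IsReduced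
      rw [hval, List.length_map, Finset.length_sort, hcard]
  · rintro ⟨ω, hsub, hred, hval⟩
    obtain ⟨l, hlsub, rfl⟩ := List.sublist_map_iff.mp hsub
    have hlnd : l.Nodup := hlsub.nodup (Finset.sort_nodup _ _)
    have hlsorted : l.Pairwise (· ≤ ·) := List.Pairwise.sublist hlsub (Finset.pairwise_sort _ _)
    refine ⟨(l.toFinset)ᶜ, ?_, ?_⟩
    · rw [compl_compl, (List.toFinset_sort _ hlnd).mpr hlsorted]
      exact hval
    · rw [compl_compl, List.toFinset_card_of_nodup hlnd, ← hval]
      have := hred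
      unfold CoxeterSystem.IsReduced at this
      rw [this, List.length_map]

theorem decompose_finset {m : ℕ} (I : Finset (Fin (m + 1))) :
    (Fin.last m ∈ I → ∃ S : Finset (Fin m), I = insert (Fin.last m) (S.image Fin.castSucc)) ∧
    (Fin.last m ∉ I → ∃ S : Finset (Fin m), I = S.image Fin.castSucc) := by
  set S := Finset.univ.filter (fun y : Fin m => y.castSucc ∈ I) with hS
  have himg : S.image Fin.castSucc = I.erase (Fin.last m) := by
    ext x
    induction x using Fin.lastCases with
    | last =>
      simp only [Finset.mem_image, Finset.mem_erase, ne_eq, not_true_eq_false, false_and,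
        iff_false]
      rintro ⟨y, _, hy⟩
      exact absurd hy (Fin.castSucc_lt_last y).ne
    | cast y =>
      simp only [Finset.mem_image, Finset.mem_erase, hS, Finset.mem_filter, Finset.mem_univ,
        true_and, Fin.castSucc_inj]
      constructor
      · rintro ⟨z, hz, rfl⟩
        exact ⟨(Fin.castSucc_lt_last z).ne, hz⟩
      · rintro ⟨-, hy⟩
        exact ⟨y, hy, rfl⟩
  constructor
  · intro hl
    exact ⟨S, by rw [himg, Finset.insert_erase hl]⟩
  · intro hl
    exact ⟨S, by rw [himg, Finset.erase_eq_of_notMem hl]⟩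

end Subword

end SCAux

theorem subword_complex_facets_induction {B W : Type*} [Group W] [Finite W]
    {M : CoxeterMatrix B} (cs : CoxeterSystem M W)
    {m : ℕ} (Q : Fin (m + 1) → B) (ρ : W) :
    -- `Q'` is the word `Q` with its last letter deleted, and `q` is the last letter of `Q`.
    ∀ Q' : Fin m → B, Q' = (fun k => Q k.castSucc) →
    ∀ q : W, q = cs.simple (Q (Fin.last m)) →
    -- (i) if `ρ` has no reduced expression as a subword of `Q'`:
    ((¬∃ I, IsSCFacet cs Q' ρ I) →
      {I | IsSCFacet cs Q ρ I} =
        {J | ∃ I, IsSCFacet cs Q' (ρ * q) I ∧ J = I.image Fin.castSucc}) ∧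
    -- (ii) if `ℓ(ρq) > ℓ(ρ)`:
    (cs.length ρ < cs.length (ρ * q) →
      {I | IsSCFacet cs Q ρ I} =
        {J | ∃ I, IsSCFacet cs Q' ρ I ∧ J = insert (Fin.last m) (I.image Fin.castSucc)}) ∧
    -- (iii) otherwise, the disjoint union of the two:
    ((∃ I, IsSCFacet cs Q' ρ I) → cs.length (ρ * q) < cs.length ρ →
      {I | IsSCFacet cs Q ρ I} =
        {J | ∃ I, IsSCFacet cs Q' (ρ * q) I ∧ J = I.image Fin.castSucc} ∪
        {J | ∃ I, IsSCFacet cs Q' ρ I ∧ J = insert (Fin.last m) (I.image Fin.castSucc)} ∧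
      Disjoint {J | ∃ I, IsSCFacet cs Q' (ρ * q) I ∧ J = I.image Fin.castSucc}
        {J | ∃ I, IsSCFacet cs Q' ρ I ∧ J = insert (Fin.last m) (I.image Fin.castSucc)}) := by
  intro Q' hQ' q hq
  subst hQ'
  subst hq
  have hdisj : Disjoint
      {J | ∃ I, IsSCFacet cs (fun k => Q k.castSucc) (ρ * cs.simple (Q (Fin.last m))) I ∧
        J = I.image Fin.castSucc}
      {J | ∃ I, IsSCFacet cs (fun k => Q k.castSucc) ρ I ∧
        J = insert (Fin.last m) (I.image Fin.castSucc)} := by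
    rw [Set.disjoint_left]
    rintro J ⟨S1, -, rfl⟩ ⟨S2, -, heq⟩
    have hmem : Fin.last m ∈ S1.image Fin.castSucc := by
      rw [heq]; exact Finset.mem_insert_self _ _
    exact absurd rfl (SCAux.mem_image_castSucc_lt _ _ hmem).ne
  refine ⟨?_, ?_, ?_⟩
  · -- case (i)
    intro hno
    ext I
    simp only [Set.mem_setOf_eq]
    constructor
    · intro hI
      by_cases hl : Fin.last m ∈ I
      · obtain ⟨S, rfl⟩ := (SCAux.decompose_finset I).1 hl
        exact absurd ⟨S, (SCAux.facet_insert_last_iff cs Q ρ S).mp hI⟩ hno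
      · obtain ⟨S, rfl⟩ := (SCAux.decompose_finset I).2 hl
        exact ⟨S, (SCAux.facet_image_castSucc cs Q ρ S hI).1, rfl⟩
    · rintro ⟨S, hS, rfl⟩
      have hms := cs.length_mul_simple ρ (Q (Fin.last m))
      have hlt : cs.length (ρ * cs.simple (Q (Fin.last m))) < cs.length ρ := by
        rcases hms with h1 | h1
        · exfalso
          apply hno
          have hword := (SCAux.exists_facet_iff cs (fun k => Q k.castSucc)
            (ρ * cs.simple (Q (Fin.last m)))).mp ⟨S, hS⟩
          have hlt2 : cs.length ((ρ * cs.simple (Q (Fin.last m))) * cs.simple (Q (Fin.last m)))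
              < cs.length (ρ * cs.simple (Q (Fin.last m))) := by
            rw [cs.simple_mul_simple_cancel_right]
            omega
          have hdes := SCAux.descent_subword cs hword (Q (Fin.last m)) hlt2
          rw [cs.simple_mul_simple_cancel_right] at hdes
          exact (SCAux.exists_facet_iff cs (fun k => Q k.castSucc) ρ).mpr hdes
        · omega
      exact SCAux.facet_image_castSucc' cs Q ρ S hlt hS
  · -- case (ii)
    intro hlen
    ext I
    simp only [Set.mem_setOf_eq]
    constructor
    · intro hI
      by_cases hl : Fin.last m ∈ I
      · obtain ⟨S, rfl⟩ := (SCAux.decompose_finset I).1 hl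
        exact ⟨S, (SCAux.facet_insert_last_iff cs Q ρ S).mp hI, rfl⟩
      · obtain ⟨S, rfl⟩ := (SCAux.decompose_finset I).2 hl
        have := (SCAux.facet_image_castSucc cs Q ρ S hI).2
        omega
    · rintro ⟨S, hS, rfl⟩
      exact (SCAux.facet_insert_last_iff cs Q ρ S).mpr hS
  · -- case (iii)
    intro _ hlt
    refine ⟨?_, hdisj⟩
    ext I
    simp only [Set.mem_setOf_eq, Set.mem_union]
    constructor
    · intro hI
      by_cases hl : Fin.last m ∈ I
      · obtain ⟨S, rfl⟩ := (SCAux.decompose_finset I).1 hl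
        exact Or.inr ⟨S, (SCAux.facet_insert_last_iff cs Q ρ S).mp hI, rfl⟩
      · obtain ⟨S, rfl⟩ := (SCAux.decompose_finset I).2 hl
        exact Or.inl ⟨S, (SCAux.facet_image_castSucc cs Q ρ S hI).1, rfl⟩
    · rintro (⟨S, hS, rfl⟩ | ⟨S, hS, rfl⟩)
      · exact SCAux.facet_image_castSucc' cs Q ρ S hlt hS
      · exact (SCAux.facet_insert_last_iff cs Q ρ S).mpr hS
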